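/- Let f : ℝ → ℂ be Lebesgue integrable with compact support. If there exists ε > 0 such that ∫_ℝ e^{−iλt} f(t) dt = 0 for every real λ with |λ| < ε, then f = 0 almost everywhere on ℝ. -/

import Mathlib

open MeasureTheory

open Filter Real Complex in
open scoped FourierTransform ContDiff SchwartzMap in
private lemma entire_aux (f : ℝ → ℂ) (hf : Integrable f) (R : ℝ)
    (hfz : ∀ t : ℝ, R < |t| → f t = 0) :
    Differentiable ℂ (fun z : ℂ => ∫ t : ℝ, Complex.exp (-(Complex.I * z * t)) * f t) := by
  have hnorm : ∀ (z : ℂ) (t : ℝ), ‖Complex.exp (-(Complex.I * z * t))‖ = Real.exp (z.im * t) := by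
    intro z t
    rw [Complex.norm_exp]
    congr 1
    simp [Complex.mul_re, Complex.mul_im]
  intro z₀
  set C : ℝ := Real.exp ((‖z₀‖ + 1) * R) with hC
  have hexp_le : ∀ z ∈ Metric.ball z₀ 1, ∀ t : ℝ, f t ≠ 0 →
      Real.exp (z.im * t) ≤ C := by
    intro z hz t hft
    have htR : |t| ≤ R := by
      by_contra h
      exact hft (hfz t (lt_of_not_ge h))
    have h1 : |z.im| ≤ ‖z‖ := Complex.abs_im_le_norm z
    have h2 : ‖z‖ ≤ ‖z₀‖ + 1 := by
      have := mem_ball_iff_norm.mp hz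
      calc ‖z‖ = ‖z₀ + (z - z₀)‖ := by ring_nf
        _ ≤ ‖z₀‖ + ‖z - z₀‖ := norm_add_le _ _
        _ ≤ ‖z₀‖ + 1 := by linarith
    apply Real.exp_le_exp.mpr
    calc z.im * t ≤ |z.im * t| := le_abs_self _
      _ = |z.im| * |t| := abs_mul _ _
      _ ≤ (‖z₀‖ + 1) * R := by
          apply mul_le_mul (h1.trans h2) htR (abs_nonneg _)
          positivity
  have hmeas : ∀ z : ℂ, AEStronglyMeasurable
      (fun t : ℝ => Complex.exp (-(Complex.I * z * t)) * f t) volume := fun z =>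
    (Continuous.aestronglyMeasurable (by fun_prop)).mul hf.1
  have key := hasDerivAt_integral_of_dominated_loc_of_deriv_le (μ := volume) (𝕜 := ℂ)
    (F := fun (z : ℂ) (t : ℝ) => Complex.exp (-(Complex.I * z * t)) * f t)
    (F' := fun (z : ℂ) (t : ℝ) =>
      (-(Complex.I * t)) * (Complex.exp (-(Complex.I * z * t)) * f t))
    (x₀ := z₀) (bound := fun t => (R * C) * ‖f t‖) (Metric.ball_mem_nhds z₀ one_pos)
    (by filter_upwards with z using hmeas z)
    (by
      apply Integrable.mono' (hf.norm.const_mul C) (hmeas z₀)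
      filter_upwards with t
      rw [norm_mul, hnorm]
      by_cases hft : f t = 0
      · simp [hft]
      · exact mul_le_mul_of_nonneg_right
          (hexp_le z₀ (Metric.mem_ball_self one_pos) t hft) (norm_nonneg _)
          )
    (by
      exact (Continuous.aestronglyMeasurable (by fun_prop)).mul (hmeas z₀))
    (by
      filter_upwards with t z hz
      by_cases hft : f t = 0
      · simp [hft]
      · have htR : |t| ≤ R := by
          by_contra h
          exact hft (hfz t (lt_of_not_ge h))
        rw [norm_mul, norm_mul, hnorm, norm_neg, norm_mul, Complex.norm_I, one_mul,
          Complex.norm_real, Real.norm_eq_abs]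
        calc |t| * (Real.exp (z.im * t) * ‖f t‖)
            ≤ R * (C * ‖f t‖) := by
              apply mul_le_mul htR ?_ (by positivity) ?_
              · exact mul_le_mul_of_nonneg_right (hexp_le z hz t hft) (norm_nonneg _)
              · exact le_trans (abs_nonneg t) htR
          _ = (R * C) * ‖f t‖ := by ring)
    (by
      apply (hf.norm.const_mul (R * C)))
    (by
      filter_upwards with t z hz
      have h0 : HasDerivAt (fun z : ℂ => (-(Complex.I * t)) * z) (-(Complex.I * t)) z := by
        simpa using (hasDerivAt_id z).const_mul (-(Complex.I * (t : ℂ)))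
      have h1 := (h0.cexp).mul_const (f t)
      have hfun : (fun z : ℂ => Complex.exp (-(Complex.I * t) * z) * f t)
          = fun z : ℂ => Complex.exp (-(Complex.I * z * t)) * f t := by
        funext w; ring_nf
      rw [hfun] at h1
      convert h1 using 1
      · rfl
      · ring_nf)
  exact key.2.differentiableAt

open Filter Real Complex in
open scoped FourierTransform ContDiff SchwartzMap in
private lemma exists_schwartz (g : ℝ → ℝ) (hg : ContDiff ℝ ∞ g) (hgs : HasCompactSupport g) :
    ∃ gs : 𝓢(ℝ, ℂ), ∀ x, gs x = (g x : ℂ) := by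
  have hgc : ContDiff ℝ ∞ (fun x : ℝ => (g x : ℂ)) :=
    Complex.ofRealCLM.contDiff.comp hg
  have hgsc : HasCompactSupport (fun x : ℝ => (g x : ℂ)) :=
    hgs.comp_left (g := fun r : ℝ => (r : ℂ)) (by simp)
  refine ⟨⟨fun x => (g x : ℂ), hgc, ?_⟩, fun x => rfl⟩
  intro k n
  obtain ⟨C, hC⟩ := Continuous.bounded_above_of_compact_support
    (f := fun x : ℝ => ‖x‖ ^ k * ‖iteratedFDeriv ℝ n (fun x : ℝ => (g x : ℂ)) x‖)
    (by
      apply Continuous.mul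
      · exact (continuous_norm).pow k
      · exact (hgc.continuous_iteratedFDeriv (by exact_mod_cast le_top)).norm)
    (((hgsc.iteratedFDeriv n).norm).mul_left)
  exact ⟨C, fun x => (le_abs_self _).trans ((Real.norm_eq_abs _ ▸ hC x))⟩

open Filter Real Complex in
open scoped FourierTransform ContDiff SchwartzMap in
/-- A compactly supported integrable function whose Fourier transform
vanishes for all frequencies `|λ| < ε` vanishes almost everywhere. -/
theorem fourier_vanishing_small_freq
    (f : ℝ → ℂ) (hf : Integrable f) (hsupp : HasCompactSupport f)
    (ε : ℝ) (hε : 0 < ε)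
    (hvanish : ∀ lam : ℝ, |lam| < ε →
      (∫ t : ℝ, Complex.exp (-(Complex.I * lam * t)) * f t) = 0) :
    f =ᵐ[volume] 0 := by
  -- support radius
  obtain ⟨R, hR⟩ : ∃ R : ℝ, tsupport f ⊆ Metric.closedBall 0 R :=
    (hsupp.isBounded).subset_closedBall 0
  have hfz : ∀ t : ℝ, R < |t| → f t = 0 := by
    intro t ht
    apply image_eq_zero_of_notMem_tsupport
    intro h
    have := hR h
    rw [Metric.mem_closedBall, Real.dist_eq, sub_zero] at this
    linarith
  set G : ℂ → ℂ := fun z => ∫ t : ℝ, Complex.exp (-(Complex.I * z * t)) * f t with hGdef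
  have hGdiff : Differentiable ℂ G := entire_aux f hf R hfz
  -- G vanishes near 0 on the reals, frequently in the punctured nbhd of 0
  have hfreq : ∃ᶠ z in nhdsWithin (0 : ℂ) {(0:ℂ)}ᶜ, G z = 0 := by
    have htend : Tendsto (fun n : ℕ => (((ε / 2) * (1 / (n + 1)) : ℝ) : ℂ)) atTop
        (nhdsWithin (0 : ℂ) {(0:ℂ)}ᶜ) := by
      apply tendsto_nhdsWithin_of_tendsto_nhds_of_eventually_within
      · have h1 : Tendsto (fun n : ℕ => ((ε / 2) * (1 / (n + 1)) : ℝ)) atTop (nhds 0) := by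
          simpa using tendsto_one_div_add_atTop_nhds_zero_nat.const_mul (ε / 2)
        have h2 := (Complex.continuous_ofReal.tendsto 0).comp h1
        simpa [Function.comp_def] using h2
      · filter_upwards with n
        simp only [Set.mem_compl_iff, Set.mem_singleton_iff]
        intro h
        have : ((ε / 2) * (1 / (n + 1)) : ℝ) = 0 := by exact_mod_cast h
        have hεn : (0:ℝ) < (ε / 2) * (1 / (n + 1)) := by positivity
        linarith
    apply htend.frequently
    apply Frequently.of_forall
    intro n
    have hpos : (0:ℝ) < (ε / 2) * (1 / (n + 1)) := by positivity
    have hlt : |(ε / 2) * (1 / (n + 1))| < ε := by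
      rw [abs_of_pos hpos]
      have h1 : (1 : ℝ) / (n + 1) ≤ 1 := by
        rw [div_le_one (by positivity)]
        simp
      nlinarith
    exact hvanish _ hlt
  have hG0 : ∀ z : ℂ, G z = 0 := by
    have hanal : AnalyticOnNhd ℂ G Set.univ := fun z _ => hGdiff.analyticAt z
    have := hanal.eqOn_zero_of_preconnected_of_frequently_eq_zero
      isPreconnected_univ (Set.mem_univ (0:ℂ)) hfreq
    intro z
    exact this (Set.mem_univ z)
  -- hence the Fourier transform vanishes identically
  have hFT : ∀ w : ℝ, 𝓕 f w = 0 := by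
    intro w
    have : 𝓕 f w = G (2 * π * w) := by
      rw [Real.fourier_real_eq_integral_exp_smul, hGdef]
      apply integral_congr_ae
      filter_upwards with v
      rw [smul_eq_mul]
      congr 1
      push_cast
      ring
    rw [this, hG0]
  -- conclude via testing against smooth compactly supported functions
  have := ae_eq_zero_of_integral_contDiff_smul_eq_zero (μ := volume)
    (hf.locallyIntegrable) ?_
  · filter_upwards [this] with x hx using hx
  · intro g gsmooth gsupp
    obtain ⟨gs, hgs⟩ := exists_schwartz g gsmooth gsupp
    set h : 𝓢(ℝ, ℂ) := (SchwartzMap.fourierTransformCLE ℂ 𝓢(ℝ, ℂ)).symm gs with hh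
    have hFh : 𝓕 (⇑h) = ⇑gs := by
      have := (SchwartzMap.fourierTransformCLE ℂ 𝓢(ℝ, ℂ)).apply_symm_apply gs
      calc 𝓕 (⇑h) = ⇑(SchwartzMap.fourierTransformCLE ℂ 𝓢(ℝ, ℂ) h) := by
            rfl
        _ = ⇑gs := by rw [this]
    have hflip : (innerₗ ℝ).flip = innerₗ ℝ := by
      apply LinearMap.ext; intro x; apply LinearMap.ext; intro y
      exact real_inner_comm x y
    have key := VectorFourier.integral_fourierIntegral_smul_eq_flip
      (μ := volume) (ν := volume) (L := innerₗ ℝ) (f := f) (g := ⇑h)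
      Real.continuous_fourierChar continuous_inner hf h.integrable
    rw [hflip] at key
    have hLHS : (∫ ξ : ℝ, (VectorFourier.fourierIntegral Real.fourierChar volume
        (innerₗ ℝ) f ξ) • (h ξ)) = 0 := by
      apply integral_eq_zero_of_ae
      filter_upwards with ξ
      have : VectorFourier.fourierIntegral Real.fourierChar volume (innerₗ ℝ) f ξ = 𝓕 f ξ := rfl
      rw [this, hFT ξ, zero_smul]
      rfl
    rw [hLHS] at key
    have hRHS : (∫ x : ℝ, f x • (VectorFourier.fourierIntegral Real.fourierChar volume
        (innerₗ ℝ) (⇑h) x)) = ∫ x : ℝ, g x • f x := by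
      apply integral_congr_ae
      filter_upwards with x
      have h1 : VectorFourier.fourierIntegral Real.fourierChar volume (innerₗ ℝ) (⇑h) x
          = 𝓕 (⇑h) x := rfl
      rw [h1, hFh, hgs x, smul_eq_mul, Complex.real_smul]
      ring
    rw [hRHS] at key
    exact key.symm
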